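/- Let σ be a free, weakly mixing measure-preserving action of a countable group G and β a free measure-preserving action of a countable group Γ on the same probability space (X,μ), with the two actions commuting. Let γ₀ ∈ Char(G), γ ∈ Char(Γ), and v : X → circle measurable with v(h⁻¹ •_β x) = γ(h) · v(x) for μ-a.e. x, for every h ∈ Γ. Suppose the cocycle w(g)(x) = γ₀(g) · v(g⁻¹ •_σ x) · (v(x))⁻¹ is a coboundary for the restricted action on β-invariant functions, i.e. there exists a measurable u : X → circle with u(h⁻¹ •_β x) = u(x) for μ-a.e. x for every h ∈ Γ, and w(g)(x) = u(g⁻¹ •_σ x) · (u(x))⁻¹ for μ-a.e. x, for every g ∈ G. Then γ₀ is the trivial character of G and γ is the trivial character of Γ. -/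

import Mathlib

open MeasureTheory Filter
open scoped symmDiff

noncomputable instance : MeasurableSpace Circle := borel Circle
instance : BorelSpace Circle := ⟨rfl⟩

/-- A `{0,1}`-valued Borel probability measure on the circle is a Dirac mass. -/
lemma aux_dirac (m : Measure Circle) [IsProbabilityMeasure m]
    (h01 : ∀ B : Set Circle, MeasurableSet B → m B = 0 ∨ m B = 1) :
    ∃ c : Circle, m {c}ᶜ = 0 := by
  have hball : ∀ (x : Circle) (ε : ℝ), m (Metric.ball x ε) ≠ 1 → m (Metric.ball x ε) = 0 :=
    fun x ε h => (h01 _ Metric.isOpen_ball.measurableSet).resolve_right h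
  have hx : ∃ x : Circle, ∀ ε : ℝ, 0 < ε → m (Metric.ball x ε) = 1 := by
    by_contra hcon
    push_neg at hcon
    choose ε hε hm using hcon
    obtain ⟨t, ht⟩ := isCompact_univ.elim_finite_subcover (fun x : Circle => Metric.ball x (ε x))
      (fun x => Metric.isOpen_ball) (fun x _ => Set.mem_iUnion.2 ⟨x, Metric.mem_ball_self (hε x)⟩)
    have h1 : (1 : ENNReal) = m Set.univ := (measure_univ).symm
    have h2 : m Set.univ ≤ ∑ i ∈ t, m (Metric.ball i (ε i)) :=
      le_trans (measure_mono ht) (measure_biUnion_finset_le t _)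
    rw [Finset.sum_eq_zero (fun i _ => hball i (ε i) (hm i))] at h2
    rw [← h1] at h2
    simp at h2
  obtain ⟨x, hx⟩ := hx
  refine ⟨x, ?_⟩
  have hsub : ({x}ᶜ : Set Circle) ⊆ ⋃ n : ℕ, (Metric.ball x (1 / (n + 1)))ᶜ := by
    intro y hy
    have hd : 0 < dist y x := dist_pos.2 hy
    obtain ⟨n, hn⟩ := exists_nat_one_div_lt hd
    exact Set.mem_iUnion.2 ⟨n, fun hmem => absurd (Metric.mem_ball.1 hmem) (not_lt.2 hn.le)⟩
  refine measure_mono_null hsub (measure_iUnion_null fun n => ?_)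
  have h1 : m (Metric.ball x (1 / (n + 1))) = 1 := hx _ (by positivity)
  rw [measure_compl Metric.isOpen_ball.measurableSet (measure_ne_top m _), h1, measure_univ,
    tsub_self]

/-- Algebraic rearrangement in the (commutative) circle group. -/
lemma aux_alg (k a b c d : Circle) (h : k * a * b⁻¹ = c * d⁻¹) :
    a * c⁻¹ = k⁻¹ * (b * d⁻¹) := by
  have h2 := congrArg (fun z : Circle => (z : ℂ)) h
  push_cast at h2
  have hb : (b:ℂ) ≠ 0 := Circle.coe_ne_zero b
  have hd : (d:ℂ) ≠ 0 := Circle.coe_ne_zero d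
  have hc : (c:ℂ) ≠ 0 := Circle.coe_ne_zero c
  have hk : (k:ℂ) ≠ 0 := Circle.coe_ne_zero k
  have : (a : ℂ) * (c:ℂ)⁻¹ = (k:ℂ)⁻¹ * (b * (d:ℂ)⁻¹) := by
    field_simp at h2 ⊢
    linear_combination h2
  exact Circle.coe_injective (by exact_mod_cast this)

lemma aux_cancel (k a b : Circle) : (k * a) * (k * b)⁻¹ = a * b⁻¹ := by
  have hk : (k:ℂ) ≠ 0 := Circle.coe_ne_zero k
  have hb : (b:ℂ) ≠ 0 := Circle.coe_ne_zero b
  have : ((k:ℂ) * a) * ((k:ℂ) * b)⁻¹ = (a:ℂ) * (b:ℂ)⁻¹ := by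
    field_simp
  exact Circle.coe_injective (by exact_mod_cast this)

/-- Equality of two measurable circle-valued functions is a measurable set. -/
lemma aux_msEq {α : Type*} [MeasurableSpace α] {f g : α → Circle}
    (hf : Measurable f) (hg : Measurable g) : MeasurableSet {x | f x = g x} := by
  have : {x | f x = g x} = (fun x => f x * (g x)⁻¹) ⁻¹' {1} := by
    ext x; simp [mul_inv_eq_one]
  rw [this]
  exact (hf.mul hg.inv) (measurableSet_singleton 1)

/-- Lift an a.e. statement to the first coordinate of a product. -/
lemma aux_fst {X : Type*} [MeasurableSpace X] (μ : Measure X) [IsProbabilityMeasure μ]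
    {P : X → Prop} (hP : MeasurableSet {x | P x}) (h : ∀ᵐ x ∂μ, P x) :
    ∀ᵐ p ∂(μ.prod μ), P p.1 := by
  rw [ae_iff] at h ⊢
  have he : {p : X × X | ¬ P p.1} = {x | ¬ P x} ×ˢ Set.univ := by ext p; simp
  rw [he, Measure.prod_prod, h, zero_mul]

/-- Lift an a.e. statement to the second coordinate of a product. -/
lemma aux_snd {X : Type*} [MeasurableSpace X] (μ : Measure X) [IsProbabilityMeasure μ]
    {P : X → Prop} (hP : MeasurableSet {x | P x}) (h : ∀ᵐ x ∂μ, P x) :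
    ∀ᵐ p ∂(μ.prod μ), P p.2 := by
  rw [ae_iff] at h ⊢
  have he : {p : X × X | ¬ P p.2} = Set.univ ×ˢ {x | ¬ P x} := by ext p; simp
  rw [he, Measure.prod_prod, h, mul_zero]

/-- Transfer an a.e. statement along a measure preserving map. -/
lemma aux_transfer {X : Type*} [MeasurableSpace X] {μ : Measure X} {T : X → X}
    (hT : MeasurePreserving T μ μ) {P : X → Prop} (hP : MeasurableSet {x | P x})
    (h : ∀ᵐ x ∂μ, P x) : ∀ᵐ x ∂μ, P (T x) := by
  rw [ae_iff] at h ⊢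
  exact hT.quasiMeasurePreserving.preimage_null h

/-- Let `σ` be a free weakly mixing m.p. action of `G` and `β` a free m.p. action of `Γ`,
commuting with `σ`. If the cocycle `w(g) = γ₀(g) σ_g(v) v*` associated to `γ₀ ∈ Char(G)`,
`γ ∈ Char_β(Γ)` and a `γ`-eigenfunction `v` is a coboundary over the `β`-invariant
unitaries, then `γ₀` and `γ` are both trivial. -/
theorem stmt10 {G Γ X : Type*} [Group G] [Group Γ] [Countable G] [Countable Γ]
    [MeasurableSpace X] (μ : Measure X) [IsProbabilityMeasure μ]
    [MulAction G X] [MulAction Γ X]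
    (hmpG : ∀ g : G, MeasurePreserving (fun x : X => g • x) μ μ)
    (hmpΓ : ∀ h : Γ, MeasurePreserving (fun x : X => h • x) μ μ)
    (hfreeG : ∀ g : G, g ≠ 1 → μ {x : X | g • x = x} = 0)
    (hfreeΓ : ∀ h : Γ, h ≠ 1 → μ {x : X | h • x = x} = 0)
    (hwmix : ∀ A : Set (X × X), MeasurableSet A →
      (∀ g : G, (μ.prod μ) (((fun p : X × X => (g • p.1, g • p.2)) '' A) ∆ A) = 0) →
      (μ.prod μ) A = 0 ∨ (μ.prod μ) A = 1)
    (hcomm : ∀ (g : G) (h : Γ) (x : X), g • (h • x) = h • (g • x))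
    (γ₀ : G →* Circle) (γ : Γ →* Circle)
    (v : X → Circle) (hv : Measurable v)
    (hvγ : ∀ h : Γ, ∀ᵐ x ∂μ, v (h⁻¹ • x) = γ h * v x)
    (u : X → Circle) (hu : Measurable u)
    (huinv : ∀ h : Γ, ∀ᵐ x ∂μ, u (h⁻¹ • x) = u x)
    (hcob : ∀ g : G, ∀ᵐ x ∂μ, γ₀ g * v (g⁻¹ • x) * (v x)⁻¹ = u (g⁻¹ • x) * (u x)⁻¹) :
    γ₀ = 1 ∧ γ = 1 := by
  have hne : (ae μ).NeBot := ae_neBot.2 (IsProbabilityMeasure.ne_zero μ)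
  set F : X → Circle := fun x => v x * (u x)⁻¹ with hFdef
  have hFm : Measurable F := hv.mul hu.inv
  -- the eigenvalue relation for F
  have hFg : ∀ g : G, ∀ᵐ x ∂μ, F (g⁻¹ • x) = (γ₀ g)⁻¹ * F x := by
    intro g
    filter_upwards [hcob g] with x hx
    exact aux_alg (γ₀ g) _ _ _ _ hx
  -- the product function Ψ
  set Ψ : X × X → Circle := fun p => F p.1 * (F p.2)⁻¹ with hΨdef
  have hΨm : Measurable Ψ := (hFm.comp measurable_fst).mul (hFm.comp measurable_snd).inv
  have hSg : ∀ g : G, MeasurableSet {x : X | F (g⁻¹ • x) = (γ₀ g)⁻¹ * F x} := fun g =>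
    aux_msEq (hFm.comp (hmpG g⁻¹).measurable) (measurable_const.mul hFm)
  -- Ψ is a.e. invariant under the diagonal action
  have hinv : ∀ g : G, ∀ᵐ p ∂(μ.prod μ), Ψ (g⁻¹ • p.1, g⁻¹ • p.2) = Ψ p := by
    intro g
    filter_upwards [aux_fst μ (hSg g) (hFg g), aux_snd μ (hSg g) (hFg g)] with p h1 h2
    show F (g⁻¹ • p.1) * (F (g⁻¹ • p.2))⁻¹ = F p.1 * (F p.2)⁻¹
    rw [h1, h2, aux_cancel]
  -- the distribution of Ψ
  set m : Measure Circle := (μ.prod μ).map Ψ with hmdef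
  have : IsProbabilityMeasure m := Measure.isProbabilityMeasure_map hΨm.aemeasurable
  have h01 : ∀ B : Set Circle, MeasurableSet B → m B = 0 ∨ m B = 1 := by
    intro B hB
    rw [hmdef, Measure.map_apply hΨm hB]
    refine hwmix _ (hΨm hB) ?_
    intro g
    have himg : ((fun p : X × X => (g • p.1, g • p.2)) '' (Ψ ⁻¹' B)) =
        (fun p : X × X => (g⁻¹ • p.1, g⁻¹ • p.2)) ⁻¹' (Ψ ⁻¹' B) := by
      have hfun := Set.image_eq_preimage_of_inverse
        (f := fun p : X × X => (g • p.1, g • p.2))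
        (g := fun p : X × X => (g⁻¹ • p.1, g⁻¹ • p.2))
        (fun p => by simp) (fun p => by simp)
      exact congrFun hfun (Ψ ⁻¹' B)
    rw [himg]
    have hzero : (μ.prod μ) {p : X × X | ¬ Ψ (g⁻¹ • p.1, g⁻¹ • p.2) = Ψ p} = 0 := by
      rw [← ae_iff]; exact hinv g
    refine measure_mono_null ?_ hzero
    intro p hp
    rcases hp with hp | hp
    · exact fun he => hp.2 (by rw [Set.mem_preimage, ← he]; exact hp.1)
    · exact fun he => hp.2 (by rw [Set.mem_preimage, Set.mem_preimage, he]; exact hp.1)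
  obtain ⟨c, hc⟩ := aux_dirac m h01
  have hΨc : ∀ᵐ p ∂(μ.prod μ), Ψ p = c := by
    rw [ae_iff]
    have : {p : X × X | ¬ Ψ p = c} = Ψ ⁻¹' {c}ᶜ := by ext p; simp
    rw [this, ← Measure.map_apply hΨm (measurableSet_singleton c).compl]
    exact hc
  -- F is a.e. constant
  obtain ⟨x₀, hx₀⟩ := (Measure.ae_ae_of_ae_prod hΨc).exists
  have hFα : ∀ᵐ x ∂μ, F x = c⁻¹ * F x₀ := by
    filter_upwards [hx₀] with y hy
    have hy' : F x₀ * (F y)⁻¹ = c := hy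
    rw [← hy']; group
  set α : Circle := c⁻¹ * F x₀ with hαdef
  have hSα : MeasurableSet {x : X | F x = α} := aux_msEq hFm measurable_const
  -- γ₀ is trivial
  have hγ₀ : γ₀ = 1 := by
    refine MonoidHom.ext fun g => ?_
    have h1 : ∀ᵐ x ∂μ, F (g⁻¹ • x) = α := aux_transfer (hmpG g⁻¹) hSα hFα
    have h2 : ∀ᵐ x ∂μ, α = (γ₀ g)⁻¹ * α := by
      filter_upwards [h1, hFg g, hFα] with x e1 e2 e3
      calc α = F (g⁻¹ • x) := e1.symm
        _ = (γ₀ g)⁻¹ * F x := e2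
        _ = (γ₀ g)⁻¹ * α := by rw [e3]
    obtain ⟨x, hx⟩ := h2.exists
    show γ₀ g = (1 : G →* Circle) g
    rw [MonoidHom.one_apply]
    have h3 : (γ₀ g)⁻¹ * α = 1 * α := by rw [one_mul, ← hx]
    have : (γ₀ g)⁻¹ = 1 := mul_right_cancel h3
    rwa [inv_eq_one] at this
  refine ⟨hγ₀, ?_⟩
  -- v = α * u a.e.
  have hvu : ∀ᵐ x ∂μ, v x = α * u x := by
    filter_upwards [hFα] with x hx
    have : v x * (u x)⁻¹ = α := hx
    rw [← this]; group
  have hSvu : MeasurableSet {x : X | v x = α * u x} :=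
    aux_msEq hv (measurable_const.mul hu)
  refine MonoidHom.ext fun h => ?_
  have h1 : ∀ᵐ x ∂μ, v (h⁻¹ • x) = α * u (h⁻¹ • x) := aux_transfer (hmpΓ h⁻¹) hSvu hvu
  have h2 : ∀ᵐ x ∂μ, γ h * v x = 1 * v x := by
    filter_upwards [h1, hvγ h, huinv h, hvu] with x e1 e2 e3 e4
    rw [one_mul, ← e2, e1, e3, ← e4]
  obtain ⟨x, hx⟩ := h2.exists
  show γ h = (1 : Γ →* Circle) h
  rw [MonoidHom.one_apply]
  exact mul_right_cancel hx
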